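/- Let R > 0 and let k : {p ∈ ℂ : |p| > R} → ℂ be holomorphic with k(p) − p → 0 as |p| → ∞. Let i, j ≥ 1 and let Ω_i, Ω_j ∈ ℂ[X] be polynomials such that k(p)^i − Ω_i(p) → 0 and k(p)^j − Ω_j(p) → 0 as |p| → ∞. Then for every r > R, ∮_{|p|=r} k(p)^i · Ω_j'(p) dp = ∮_{|p|=r} k(p)^j · Ω_i'(p) dp, where Ω' denotes the derivative of the polynomial Ω and ∮_{|p|=r} f(p) dp denotes the circle integral of f over the circle of radius r centered at 0. -/

import Mathlib

open Polynomial Filter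

open Metric Set

lemma exists_poly_antideriv (q : Polynomial ℂ) : ∃ P : Polynomial ℂ, P.derivative = q := by
  induction q using Polynomial.induction_on' with
  | add p q hp hq =>
    obtain ⟨P, hP⟩ := hp; obtain ⟨Q, hQ⟩ := hq
    exact ⟨P + Q, by simp [hP, hQ]⟩
  | monomial n a =>
    refine ⟨Polynomial.C (a / ((n : ℂ) + 1)) * Polynomial.X ^ (n + 1), ?_⟩
    have hne : ((n : ℂ) + 1) ≠ 0 := by
      have : ((n + 1 : ℕ) : ℂ) ≠ 0 := Nat.cast_ne_zero.mpr (Nat.succ_ne_zero n)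
      push_cast at this; exact this
    rw [Polynomial.derivative_C_mul, Polynomial.derivative_X_pow, Nat.add_sub_cancel,
      ← mul_assoc, ← Polynomial.C_mul]
    push_cast
    rw [div_mul_cancel₀ _ hne, Polynomial.C_mul_X_pow_eq_monomial]

lemma circleIntegral_add' {f g : ℂ → ℂ} {c : ℂ} {R : ℝ} (hf : CircleIntegrable f c R)
    (hg : CircleIntegrable g c R) :
    (∮ z in C(c, R), (f z + g z)) = (∮ z in C(c, R), f z) + ∮ z in C(c, R), g z := by
  simp only [circleIntegral, smul_add, intervalIntegral.integral_add hf.out hg.out]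

lemma bound_of_tendsto {f : ℂ → ℂ}
    (h : Tendsto f (comap (fun p : ℂ => ‖p‖) atTop) (nhds 0)) {ε : ℝ} (hε : 0 < ε) :
    ∃ M : ℝ, ∀ p : ℂ, M ≤ ‖p‖ → ‖f p‖ ≤ ε := by
  have h2 : ∀ᶠ p in comap (fun p : ℂ => ‖p‖) atTop, ‖f p‖ < ε := by
    have := Metric.tendsto_nhds.mp h ε hε
    simpa [dist_eq_norm] using this
  rw [eventually_comap] at h2
  rw [eventually_atTop] at h2
  obtain ⟨M, hM⟩ := h2
  exact ⟨M, fun p hp => le_of_lt (hM ‖p‖ hp p rfl)⟩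


/-- the symmetry `res_∞ κ^i dΩ_j = res_∞ κ^j dΩ_i`.  Here `k` is
holomorphic on `|p| > R` with `k(p) − p → 0` at infinity and `Ω_i`, `Ω_j` are the
polynomial parts of `k^i`, `k^j` at infinity (i.e. `k^i − Ω_i → 0`, `k^j − Ω_j → 0`);
then the circle integrals of `k^i Ω_j'` and `k^j Ω_i'` over any circle `|p| = r`,
`r > R`, agree. -/
theorem residue_symmetry (R : ℝ) (hR : 0 < R) (k : ℂ → ℂ)
    (hk_hol : DifferentiableOn ℂ k {p : ℂ | R < ‖p‖})
    (hk_asym : Tendsto (fun p : ℂ => k p - p)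
      (comap (fun p : ℂ => ‖p‖) atTop) (nhds 0))
    (i j : ℕ) (hi : 1 ≤ i) (hj : 1 ≤ j)
    (Ωi Ωj : Polynomial ℂ)
    (hΩi : Tendsto (fun p : ℂ => k p ^ i - Ωi.eval p)
      (comap (fun p : ℂ => ‖p‖) atTop) (nhds 0))
    (hΩj : Tendsto (fun p : ℂ => k p ^ j - Ωj.eval p)
      (comap (fun p : ℂ => ‖p‖) atTop) (nhds 0)) :
    ∀ r : ℝ, R < r →
      (∮ p in C(0, r), k p ^ i * Ωj.derivative.eval p)
        = ∮ p in C(0, r), k p ^ j * Ωi.derivative.eval p := by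
  set S : Set ℂ := {p : ℂ | R < ‖p‖} with hSdef
  have hS : IsOpen S := isOpen_lt continuous_const continuous_norm
  have hkd : ∀ p ∈ S, DifferentiableAt ℂ k p := fun p hp =>
    (hk_hol p hp).differentiableAt (hS.mem_nhds hp)
  have hk_an : AnalyticOnNhd ℂ k S := hk_hol.analyticOnNhd hS
  have hk'd : ∀ p ∈ S, DifferentiableAt ℂ (deriv k) p := fun p hp =>
    (hk_an.deriv p hp).differentiableAt
  have hkc : ContinuousOn k S := hk_hol.continuousOn
  have hk'c : ContinuousOn (deriv k) S :=
    fun p hp => ((hk'd p hp).continuousAt).continuousWithinAt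
  -- the basic functions
  set fi : ℂ → ℂ := fun p => k p ^ i - Ωi.eval p with hfidef
  set fj : ℂ → ℂ := fun p => k p ^ j - Ωj.eval p with hfjdef
  set di : ℂ → ℂ := fun p => (i : ℂ) * k p ^ (i - 1) * deriv k p with hdidef
  set dj : ℂ → ℂ := fun p => (j : ℂ) * k p ^ (j - 1) * deriv k p with hdjdef
  set gi : ℂ → ℂ := fun p => di p - Ωi.derivative.eval p with hgidef
  set gj : ℂ → ℂ := fun p => dj p - Ωj.derivative.eval p with hgjdef
  -- derivatives
  have hK : ∀ (n : ℕ), ∀ p ∈ S, HasDerivAt (fun q => k q ^ n)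
      ((n : ℂ) * k p ^ (n - 1) * deriv k p) p :=
    fun n p hp => ((hkd p hp).hasDerivAt).pow n
  have hfi' : ∀ p ∈ S, HasDerivAt fi (gi p) p :=
    fun p hp => (hK i p hp).sub (Ωi.hasDerivAt p)
  have hfj' : ∀ p ∈ S, HasDerivAt fj (gj p) p :=
    fun p hp => (hK j p hp).sub (Ωj.hasDerivAt p)
  -- continuity facts
  have cont_fi : ContinuousOn fi S := (hkc.pow i).sub ((Ωi.continuous).continuousOn)
  have cont_fj : ContinuousOn fj S := (hkc.pow j).sub ((Ωj.continuous).continuousOn)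
  have cont_di : ContinuousOn di S := (continuousOn_const.mul (hkc.pow (i - 1))).mul hk'c
  have cont_dj : ContinuousOn dj S := (continuousOn_const.mul (hkc.pow (j - 1))).mul hk'c
  have cont_gi : ContinuousOn gi S := cont_di.sub ((Ωi.derivative.continuous).continuousOn)
  have cont_gj : ContinuousOn gj S := cont_dj.sub ((Ωj.derivative.continuous).continuousOn)
  -- differentiability facts
  have diff_fi : ∀ p ∈ S, DifferentiableAt ℂ fi p := fun p hp => (hfi' p hp).differentiableAt
  have diff_fj : ∀ p ∈ S, DifferentiableAt ℂ fj p := fun p hp => (hfj' p hp).differentiableAt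
  have diff_gj : ∀ p ∈ S, DifferentiableAt ℂ gj p := fun p hp =>
    (((differentiableAt_const _).mul ((hkd p hp).pow _)).mul (hk'd p hp)).sub
      ((Ωj.derivative).differentiableAt)
  -- spheres are inside S
  have hsub : ∀ {r : ℝ}, R < r → sphere (0 : ℂ) r ⊆ S := by
    intro r hr z hz
    have hzabs : ‖z‖ = r := by simpa [Complex.dist_eq, sub_zero] using hz
    simp only [hSdef, mem_setOf_eq, hzabs]; exact hr
  -- THE KEY VANISHING:  ∮ fi * gj = 0
  have Z5 : ∀ r : ℝ, R < r → (∮ p in C(0, r), fi p * gj p) = 0 := by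
    have cont : ContinuousOn (fun p => fi p * gj p) S := cont_fi.mul cont_gj
    have diff : ∀ p ∈ S, DifferentiableAt ℂ (fun p => fi p * gj p) p :=
      fun p hp => (diff_fi p hp).mul (diff_gj p hp)
    have hconst : ∀ r1 r2 : ℝ, R < r1 → r1 ≤ r2 →
        (∮ p in C(0, r2), fi p * gj p) = ∮ p in C(0, r1), fi p * gj p := by
      intro r1 r2 h1 h12
      have hsub2 : closedBall (0 : ℂ) r2 \ ball (0 : ℂ) r1 ⊆ S := by
        intro z hz
        have hz2 := hz.2
        simp only [mem_ball, Complex.dist_eq, sub_zero, not_lt] at hz2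
        simp only [hSdef, mem_setOf_eq]
        exact lt_of_lt_of_le h1 hz2
      refine Complex.circleIntegral_eq_of_differentiable_on_annulus_off_countable (hR.trans h1) h12
        countable_empty (cont.mono hsub2) (fun z hz => ?_)
      have hz1 := hz.1.2
      simp only [mem_closedBall, Complex.dist_eq, sub_zero, not_le] at hz1
      exact diff z (by simp only [hSdef, mem_setOf_eq]; exact h1.trans hz1)
    intro r0 hr00
    have key : ∀ ε : ℝ, 0 < ε →
        ‖∮ p in C(0, r0), fi p * gj p‖ ≤ 4 * Real.pi * ε ^ 2 := by
      intro ε hε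
      obtain ⟨Mi, hMi⟩ := bound_of_tendsto hΩi hε
      obtain ⟨Mj, hMj⟩ := bound_of_tendsto hΩj hε
      set r := max (max r0 (2 * R + 1)) (max Mi (2 * Mj)) with hrdef
      have hrr0 : r0 ≤ r := le_max_of_le_left (le_max_left _ _)
      have hrR : 2 * R + 1 ≤ r := le_max_of_le_left (le_max_right _ _)
      have hrMi : Mi ≤ r := le_max_of_le_right (le_max_left _ _)
      have hrMj : 2 * Mj ≤ r := le_max_of_le_right (le_max_right _ _)
      have hRr : R < r := by linarith
      have hrpos : 0 < r := hR.trans hRr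
      have hhalfR : R < r / 2 := by linarith
      have hhalfpos : 0 < r / 2 := by linarith
      rw [← hconst r0 r hr00 hrr0]
      have hpt : ∀ z ∈ sphere (0 : ℂ) r, ‖fi z * gj z‖ ≤ ε * (ε / (r / 2)) := by
        intro z hz
        have hzabs : ‖z‖ = r := by simpa [Complex.dist_eq, sub_zero] using hz
        have hzn : ‖z‖ = r := hzabs
        have hzS : z ∈ S := hsub hRr hz
        have h1 : ‖fi z‖ ≤ ε := hMi z (by rw [hzabs]; exact hrMi)
        have hball : closedBall z (r / 2) ⊆ S := by
          intro w hw
          simp only [mem_closedBall, Complex.dist_eq] at hw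
          have h2 := norm_sub_norm_le z w
          rw [norm_sub_rev] at h2
          have h3 : ‖w - z‖ ≤ r / 2 := hw
          simp only [hSdef, mem_setOf_eq]
          linarith
        have hdc : DiffContOnCl ℂ fj (ball z (r / 2)) := by
          apply DifferentiableOn.diffContOnCl
          rw [closure_ball z (ne_of_gt hhalfpos)]
          exact fun w hw => (diff_fj w (hball hw)).differentiableWithinAt
        have hsb : ∀ w ∈ sphere z (r / 2), ‖fj w‖ ≤ ε := by
          intro w hw
          have hw' : ‖w - z‖ = r / 2 := by simpa [Complex.dist_eq] using hw
          have h2 := norm_sub_norm_le z w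
          rw [norm_sub_rev] at h2
          apply hMj
          linarith
        have hgjb : ‖gj z‖ ≤ ε / (r / 2) := by
          have hcb := Complex.norm_deriv_le_of_forall_mem_sphere_norm_le hhalfpos hdc hsb
          have hdz : deriv fj z = gj z := (hfj' z hzS).deriv
          rwa [hdz] at hcb
        calc ‖fi z * gj z‖ = ‖fi z‖ * ‖gj z‖ := norm_mul _ _
          _ ≤ ε * (ε / (r / 2)) := mul_le_mul h1 hgjb (norm_nonneg _) hε.le
      have hb := circleIntegral.norm_integral_le_of_norm_le_const hrpos.le hpt
      have heq : 2 * Real.pi * r * (ε * (ε / (r / 2))) = 4 * Real.pi * ε ^ 2 := by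
        field_simp; ring
      rwa [heq] at hb
    have hle : ∀ δ : ℝ, 0 < δ → ‖∮ p in C(0, r0), fi p * gj p‖ ≤ δ := by
      intro δ hδ
      have h4π : (0 : ℝ) < 4 * Real.pi := by positivity
      have hεpos : 0 < Real.sqrt (δ / (4 * Real.pi)) := Real.sqrt_pos.mpr (by positivity)
      have hk2 := key _ hεpos
      rw [Real.sq_sqrt (by positivity : (0 : ℝ) ≤ δ / (4 * Real.pi))] at hk2
      have : 4 * Real.pi * (δ / (4 * Real.pi)) = δ := by field_simp
      rwa [this] at hk2
    have hnorm : ‖∮ p in C(0, r0), fi p * gj p‖ ≤ 0 :=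
      le_of_forall_pos_le_add (fun ε hε => by simpa using hle ε hε)
    exact norm_le_zero_iff.mp hnorm
  -- now fix r
  intro r hr
  have hr0 : (0 : ℝ) < r := hR.trans hr
  have hint : ∀ {g : ℂ → ℂ}, ContinuousOn g S → CircleIntegrable g 0 r :=
    fun hg => (hg.mono (hsub hr)).circleIntegrable hr0.le
  have congr_int : ∀ {f g : ℂ → ℂ}, (∀ z ∈ sphere (0 : ℂ) r, f z = g z) →
      (∮ p in C(0, r), f p) = ∮ p in C(0, r), g p :=
    fun h => circleIntegral.integral_congr hr0.le h
  -- Z1 : polynomial part integrates to zero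
  obtain ⟨P, hP⟩ := exists_poly_antideriv (Ωi * Ωj.derivative)
  have Z1 : (∮ p in C(0, r), Ωi.eval p * Ωj.derivative.eval p) = 0 := by
    refine circleIntegral.integral_eq_zero_of_hasDerivWithinAt hr0.le
      (f := fun p => P.eval p) (fun z _ => ?_)
    have h := (P.hasDerivAt z).hasDerivWithinAt (s := sphere (0 : ℂ) r)
    rwa [hP, Polynomial.eval_mul] at h
  -- Z2 : integration by parts identity
  have Z2 : (∮ p in C(0, r), (gi p * k p ^ j + fi p * dj p)) = 0 := by
    refine circleIntegral.integral_eq_zero_of_hasDerivWithinAt hr0.le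
      (f := fun p => fi p * k p ^ j) (fun z hz => ?_)
    exact (((hfi' z (hsub hr hz)).mul (hK j z (hsub hr hz)))).hasDerivWithinAt
  -- Z4 : ∮ di * k^j = 0
  have Z4 : (∮ p in C(0, r), di p * k p ^ j) = 0 := by
    have hne : ((i + j : ℕ) : ℂ) ≠ 0 := Nat.cast_ne_zero.mpr (by omega)
    have Z4' : (∮ p in C(0, r), ((i + j : ℕ) : ℂ) * k p ^ (i + j - 1) * deriv k p) = 0 := by
      refine circleIntegral.integral_eq_zero_of_hasDerivWithinAt hr0.le
        (f := fun p => k p ^ (i + j)) (fun z hz => ?_)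
      exact (hK (i + j) z (hsub hr hz)).hasDerivWithinAt
    have Zh : (∮ p in C(0, r), (k p ^ (i + j - 1) * deriv k p)) = 0 := by
      have e : ∀ z ∈ sphere (0 : ℂ) r, ((i + j : ℕ) : ℂ) * k z ^ (i + j - 1) * deriv k z
          = ((i + j : ℕ) : ℂ) * (k z ^ (i + j - 1) * deriv k z) := fun z _ => by ring
      rw [congr_int e, circleIntegral.integral_const_mul] at Z4'
      exact (mul_eq_zero.mp Z4').resolve_left hne
    have e : ∀ z ∈ sphere (0 : ℂ) r, di z * k z ^ j
        = (i : ℂ) * (k z ^ (i + j - 1) * deriv k z) := by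
      intro z _
      have hpow : k z ^ (i - 1) * k z ^ j = k z ^ (i + j - 1) := by
        rw [← pow_add]; congr 1; omega
      simp only [hdidef]; rw [← hpow]; ring
    rw [congr_int e, circleIntegral.integral_const_mul, Zh, mul_zero]
  -- integrability
  have int_fiΩj : CircleIntegrable (fun p => fi p * Ωj.derivative.eval p) 0 r :=
    hint (cont_fi.mul ((Ωj.derivative.continuous).continuousOn))
  have int_ΩiΩj : CircleIntegrable (fun p => Ωi.eval p * Ωj.derivative.eval p) 0 r :=
    hint (((Ωi.continuous).continuousOn).mul ((Ωj.derivative.continuous).continuousOn))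
  have int_fidj : CircleIntegrable (fun p => fi p * dj p) 0 r := hint (cont_fi.mul cont_dj)
  have int_figj : CircleIntegrable (fun p => fi p * gj p) 0 r := hint (cont_fi.mul cont_gj)
  have int_gikj : CircleIntegrable (fun p => gi p * k p ^ j) 0 r := hint (cont_gi.mul (hkc.pow j))
  have int_dikj : CircleIntegrable (fun p => di p * k p ^ j) 0 r := hint (cont_di.mul (hkc.pow j))
  have int_Ωikj : CircleIntegrable (fun p => Ωi.derivative.eval p * k p ^ j) 0 r :=
    hint (((Ωi.derivative.continuous).continuousOn).mul (hkc.pow j))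
  -- the chain
  have step1 : (∮ p in C(0, r), k p ^ i * Ωj.derivative.eval p)
      = ∮ p in C(0, r), fi p * Ωj.derivative.eval p := by
    have e : ∀ z ∈ sphere (0 : ℂ) r, k z ^ i * Ωj.derivative.eval z
        = fi z * Ωj.derivative.eval z + Ωi.eval z * Ωj.derivative.eval z := by
      intro z _; simp only [hfidef]; ring
    rw [congr_int e, circleIntegral_add' int_fiΩj int_ΩiΩj, Z1, add_zero]
  have step2 : (∮ p in C(0, r), fi p * Ωj.derivative.eval p)
      = ∮ p in C(0, r), fi p * dj p := by
    have e : ∀ z ∈ sphere (0 : ℂ) r, fi z * Ωj.derivative.eval z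
        = fi z * dj z - fi z * gj z := by
      intro z _; simp only [hgjdef]; ring
    rw [congr_int e, circleIntegral.integral_sub int_fidj int_figj, Z5 r hr, sub_zero]
  have step3 : (∮ p in C(0, r), fi p * dj p) = - ∮ p in C(0, r), gi p * k p ^ j := by
    have h := Z2
    rw [circleIntegral_add' int_gikj int_fidj] at h
    exact eq_neg_of_add_eq_zero_left (by rwa [add_comm] at h)
  have step4 : (∮ p in C(0, r), gi p * k p ^ j)
      = - ∮ p in C(0, r), Ωi.derivative.eval p * k p ^ j := by
    have e : ∀ z ∈ sphere (0 : ℂ) r, gi z * k z ^ j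
        = di z * k z ^ j - Ωi.derivative.eval z * k z ^ j := by
      intro z _; simp only [hgidef]; ring
    rw [congr_int e, circleIntegral.integral_sub int_dikj int_Ωikj, Z4, zero_sub]
  have step5 : (∮ p in C(0, r), Ωi.derivative.eval p * k p ^ j)
      = ∮ p in C(0, r), k p ^ j * Ωi.derivative.eval p :=
    congr_int (fun z _ => mul_comm _ _)
  rw [step1, step2, step3, step4, neg_neg, step5]
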